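/- The curve γ: [−1, 1] → R² given by γ(t) = (t, t(1−t²)²) is 3-crossing, but [−1, 1] cannot be subdivided into fewer than 4 closed subintervals on each of which γ is convex (2-crossing); in particular, the constant M(2) in the subdivision theorem for 3-crossing planar curves satisfies M(2) ≥ 4. -/

import Mathlib

open Set

/-- `h` is an (affine) hyperplane in `ℝ^d`: the solution set of a nontrivial
linear equation `∑ i, u i * x i = c`. -/
def IsHyperplane {d : ℕ} (h : Set (Fin d → ℝ)) : Prop :=
  ∃ (u : Fin d → ℝ) (c : ℝ), u ≠ 0 ∧ h = {x | ∑ i, u i * x i = c}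

/-- A curve `γ` is `k`-crossing on the interval `I` if for every hyperplane `h`
the set `{t ∈ I : γ t ∈ h}` has at most `k` elements. -/
def CurveCrossing {d : ℕ} (k : ℕ) (I : Set ℝ) (γ : ℝ → (Fin d → ℝ)) : Prop :=
  ∀ h : Set (Fin d → ℝ), IsHyperplane h → {t | t ∈ I ∧ γ t ∈ h}.encard ≤ (k : ℕ∞)

/-- The polygonal path `p 0 p 1 ⋯ p (n-1)`, as a subset of `ℝ^d`
(the union of its edges). -/
def PathSet {d n : ℕ} (p : Fin n → (Fin d → ℝ)) : Set (Fin d → ℝ) :=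
  ⋃ (i : Fin n) (h : (i : ℕ) + 1 < n), segment ℝ (p i) (p ⟨(i : ℕ) + 1, h⟩)

/-- A polygonal path is `k`-crossing if every hyperplane containing no edge of the
path intersects the path in at most `k` points. -/
def PathCrossing {d n : ℕ} (k : ℕ) (p : Fin n → (Fin d → ℝ)) : Prop :=
  ∀ h : Set (Fin d → ℝ), IsHyperplane h →
    (∀ (i : Fin n) (hi : (i : ℕ) + 1 < n), ¬ segment ℝ (p i) (p ⟨(i : ℕ) + 1, hi⟩) ⊆ h) →
    (PathSet p ∩ h).encard ≤ (k : ℕ∞)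

/-- A point sequence in `ℝ^d` is in general position if every at most `d+1` of the
points are affinely independent. -/
def GeneralPosition {d n : ℕ} (p : Fin n → (Fin d → ℝ)) : Prop :=
  ∀ s : Finset (Fin n), s.card ≤ d + 1 → AffineIndependent ℝ (fun i : s => p i)

/-- The sign (orientation) of an ordered `(d+1)`-tuple of points of `ℝ^d`: the sign of
the determinant of the `(d+1) × (d+1)` matrix whose `j`-th column is `(1, q j)`. -/
noncomputable def otSign {d : ℕ} (q : Fin (d + 1) → (Fin d → ℝ)) : ℝ :=
  Real.sign (Matrix.det (Matrix.of fun i j : Fin (d + 1) =>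
    (Fin.cons (1 : ℝ) (q j) : Fin (d + 1) → ℝ) i))

/-- A point sequence is order-type homogeneous if all of its increasing-index
`(d+1)`-tuples have the same nonzero sign. -/
def OrderTypeHomogeneous {d n : ℕ} (p : Fin n → (Fin d → ℝ)) : Prop :=
  ∃ σ : ℝ, σ ≠ 0 ∧ ∀ f : Fin (d + 1) → Fin n, StrictMono f →
    otSign (fun j => p (f j)) = σ

/-- The sign of a `(d+1)`-element subset of the index set of a point sequence:
the sign of the corresponding increasing-index `(d+1)`-tuple (junk value `0` if the
set does not have `d+1` elements). -/
noncomputable def finsetSign {d n : ℕ} (p : Fin n → (Fin d → ℝ)) (s : Finset (Fin n)) : ℝ :=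
  if h : s.card = d + 1 then otSign (fun j => p ((s.orderIsoOfFin h) j : Fin n)) else 0

/-- A point sequence in `ℝ^d` is in super-general position if for each `1 ≤ k ≤ d` its
projection to the first `k` coordinates is in general position. -/
def SuperGeneralPosition {d n : ℕ} (p : Fin n → (Fin d → ℝ)) : Prop :=
  ∀ (k : ℕ), 1 ≤ k → ∀ (hk : k ≤ d),
    GeneralPosition (fun i => fun j : Fin k => p i (Fin.castLE hk j))

/-- A point sequence in `ℝ^d` is super-order-type homogeneous if for each `1 ≤ k ≤ d` its
projection to the first `k` coordinates is order-type homogeneous. -/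
def SuperOrderTypeHomogeneous {d n : ℕ} (p : Fin n → (Fin d → ℝ)) : Prop :=
  ∀ (k : ℕ), 1 ≤ k → ∀ (hk : k ≤ d),
    OrderTypeHomogeneous (fun i => fun j : Fin k => p i (Fin.castLE hk j))

/-- `OTNum d n` is the smallest `N` such that every sequence of `N` points in general
position in `ℝ^d` contains an order-type homogeneous subsequence of length `n`. -/
noncomputable def OTNum (d n : ℕ) : ℕ :=
  sInf {N : ℕ | ∀ p : Fin N → (Fin d → ℝ), GeneralPosition p →
    ∃ f : Fin n → Fin N, StrictMono f ∧ OrderTypeHomogeneous (fun i => p (f i))}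

/-- `COTNum d n` is the smallest `N` such that every sequence of `N` points in
super-general position in `ℝ^d` contains a super-order-type homogeneous subsequence
of length `n`. -/
noncomputable def COTNum (d n : ℕ) : ℕ :=
  sInf {N : ℕ | ∀ p : Fin N → (Fin d → ℝ), SuperGeneralPosition p →
    ∃ f : Fin n → Fin N, StrictMono f ∧ SuperOrderTypeHomogeneous (fun i => p (f i))}

/-- The tower function: `twr 1 x = x` and `twr (i+1) x = 2 ^ twr i x`. -/
def twr (k x : ℕ) : ℕ := (fun y => 2 ^ y)^[k - 1] x

/-- `t` is an `ε`-sample of the interval `[a, b]`: an increasing tuple of points of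
`[a, b]` meeting every subinterval of `[a, b]` of length `ε`. -/
def IsEpsSample (a b ε : ℝ) {n : ℕ} (t : Fin n → ℝ) : Prop :=
  StrictMono t ∧ (∀ i, t i ∈ Set.Icc a b) ∧
    ∀ x : ℝ, Set.Icc x (x + ε) ⊆ Set.Icc a b → ∃ i, t i ∈ Set.Icc x (x + ε)

/-- All `(k+1)`-element subsets of the index interval `[a, b]` have the same sign. -/
def IntervalHomog {n : ℕ} (k : ℕ) (sgn : Finset (Fin n) → Bool) (a b : Fin n) : Prop :=
  ∃ σ : Bool, ∀ s : Finset (Fin n), s.card = k + 1 → (∀ i ∈ s, a ≤ i ∧ i ≤ b) → sgn s = σ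

/-- `c 0 = 0 < c 1 < ⋯ < c m = n - 1` are the cut points of the greedy partition of the
`k`-sequence on `Fin n` with sign function `sgn` into the `m` blocks
`[c 0, c 1], [c 1, c 2], …, [c (m-1), c m]` (consecutive blocks overlap in one point):
each block has all its `(k+1)`-element subsets of the same sign, and each block is
maximal with this property (cannot be extended to the right). -/
def IsGreedyPartition {n : ℕ} (k : ℕ) (sgn : Finset (Fin n) → Bool) (m : ℕ)
    (c : Fin (m + 1) → Fin n) : Prop :=
  (c 0 : ℕ) = 0 ∧ (c (Fin.last m) : ℕ) = n - 1 ∧ StrictMono c ∧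
    (∀ j : Fin m, IntervalHomog k sgn (c j.castSucc) (c j.succ)) ∧
    (∀ j : Fin m, ∀ e : Fin n, c j.succ < e → ¬ IntervalHomog k sgn (c j.castSucc) e)

/-- A `k`-sequence is a flip `k`-sequence if for every `k`-element subset `A` of indices
the sign sequence `(sgn (insert i A) : i ∉ A)` (indices in increasing order) has at most
one sign change; for `±`-valued sequences this says there are no positions `i < j < l`
with `sgn (insert i A) ≠ sgn (insert j A)` and `sgn (insert j A) ≠ sgn (insert l A)`. -/
def FlipSeq {n : ℕ} (k : ℕ) (sgn : Finset (Fin n) → Bool) : Prop :=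
  ∀ A : Finset (Fin n), A.card = k →
    ¬ ∃ i j l : Fin n, i < j ∧ j < l ∧ i ∉ A ∧ j ∉ A ∧ l ∉ A ∧
      sgn (insert i A) ≠ sgn (insert j A) ∧ sgn (insert j A) ≠ sgn (insert l A)


section Helpers

private lemma exists_four_lt (S : Set ℝ) (h : 3 < S.encard) :
    ∃ a b c d : ℝ, a ∈ S ∧ b ∈ S ∧ c ∈ S ∧ d ∈ S ∧ a < b ∧ b < c ∧ c < d := by
  obtain ⟨T, hTS, hT⟩ := Set.exists_subset_encard_eq (show (4:ℕ∞) ≤ S.encard from Order.add_one_le_of_lt h)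
  have hfin : T.Finite := Set.finite_of_encard_eq_coe (by exact_mod_cast hT)
  have hcard : hfin.toFinset.card = 4 := by
    have := hfin.encard_eq_coe_toFinset_card
    rw [hT] at this; exact_mod_cast this.symm
  set e := hfin.toFinset.orderIsoOfFin hcard with he
  have hmem : ∀ i : Fin 4, (e i : ℝ) ∈ S := fun i => hTS (hfin.mem_toFinset.mp (e i).2)
  have hlt : ∀ i j : Fin 4, i < j → (e i : ℝ) < (e j : ℝ) := by
    intro i j hij
    exact_mod_cast (e.lt_iff_lt.mpr hij)
  exact ⟨e 0, e 1, e 2, e 3, hmem 0, hmem 1, hmem 2, hmem 3,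
    hlt 0 1 (by decide), hlt 1 2 (by decide), hlt 2 3 (by decide)⟩

private lemma rolle_quintic (B C x y : ℝ) (hxy : x < y)
    (hx : x^5 - 2*x^3 + B*x = C) (hy : y^5 - 2*y^3 + B*y = C) :
    ∃ z, x < z ∧ z < y ∧ 5*z^4 - 6*z^2 + B = 0 := by
  have hd : ∀ t ∈ Ioo x y, HasDerivAt (fun t : ℝ => t^5 - 2*t^3 + B*t)
      ((fun t : ℝ => 5*t^4 - 6*t^2 + B) t) t := by
    intro t _
    have h : HasDerivAt (fun t : ℝ => t^5 - 2*t^3 + B*t)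
        ((5:ℕ) * t ^ (5 - 1) - 2 * ((3:ℕ) * t ^ (3 - 1)) + B * 1) t :=
      ((hasDerivAt_pow 5 t).sub ((hasDerivAt_pow 3 t).const_mul 2)).add
      ((hasDerivAt_id t).const_mul B)
    convert h using 1
    push_cast; ring
  obtain ⟨z, hz, hz0⟩ := exists_hasDerivAt_eq_zero hxy
    (by fun_prop) (by rw [hx, hy]) hd
  exact ⟨z, hz.1, hz.2, hz0⟩

private lemma quad_contra (B s₁ s₂ s₃ : ℝ) (h12 : s₁ < s₂) (h23 : s₂ < s₃)
    (e₁ : 5*s₁^2 - 6*s₁ + B = 0) (e₂ : 5*s₂^2 - 6*s₂ + B = 0)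
    (e₃ : 5*s₃^2 - 6*s₃ + B = 0) : False := by
  have k1 : (s₂ - s₁) * (5*(s₁+s₂) - 6) = 0 := by linear_combination e₂ - e₁
  have k2 : (s₃ - s₂) * (5*(s₂+s₃) - 6) = 0 := by linear_combination e₃ - e₂
  have g1 : 5*(s₁+s₂) - 6 = 0 := by
    rcases mul_eq_zero.mp k1 with h | h
    · linarith
    · exact h
  have g2 : 5*(s₂+s₃) - 6 = 0 := by
    rcases mul_eq_zero.mp k2 with h | h
    · linarith
    · exact h
  linarith

private lemma b_gt_one (B z₁ z₂ z₃ : ℝ) (h12 : z₁ < z₂) (h23 : z₂ < z₃)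
    (hb1 : -1 < z₁) (hb3 : z₃ < 1)
    (e₁ : 5*z₁^4 - 6*z₁^2 + B = 0) (e₂ : 5*z₂^4 - 6*z₂^2 + B = 0)
    (e₃ : 5*z₃^4 - 6*z₃^2 + B = 0) : 1 < B := by
  have hz1 : z₁^2 < 1 := by nlinarith
  have hz2 : z₂^2 < 1 := by nlinarith
  have hz3 : z₃^2 < 1 := by nlinarith
  have k12 : (z₂^2 - z₁^2) * (5*(z₁^2+z₂^2) - 6) = 0 := by linear_combination e₂ - e₁
  have k13 : (z₃^2 - z₁^2) * (5*(z₁^2+z₃^2) - 6) = 0 := by linear_combination e₃ - e₁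
  -- in every case we show 1/5 < z₁^2, then B = 6 z₁² - 5 z₁⁴ > 1
  have key : 1/5 < z₁^2 := by
    rcases mul_eq_zero.mp k12 with h | h
    · -- z₂² = z₁²
      rcases mul_eq_zero.mp k13 with h' | h'
      · -- z₃² = z₁² too: three distinct with equal squares, contradiction
        exfalso
        have hz21 : z₂ = -z₁ := by
          have : (z₂ - z₁) * (z₂ + z₁) = 0 := by linear_combination h
          rcases mul_eq_zero.mp this with h'' | h''
          · exfalso; linarith
          · linarith
        have hz31 : z₃ = -z₁ := by
          have : (z₃ - z₁) * (z₃ + z₁) = 0 := by linear_combination h'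
          rcases mul_eq_zero.mp this with h'' | h''
          · exfalso; linarith
          · linarith
        linarith [hz21 ▸ hz31 ▸ h23]
      · nlinarith [h']
    · nlinarith [h]
  nlinarith [e₁, mul_pos (show (0:ℝ) < 5*z₁^2 - 1 by linarith) (show (0:ℝ) < 1 - z₁^2 by linarith)]

private lemma no_four_roots (B C t₁ t₂ t₃ t₄ : ℝ)
    (hl : -1 ≤ t₁) (hr : t₄ ≤ 1) (o₁ : t₁ < t₂) (o₂ : t₂ < t₃) (o₃ : t₃ < t₄)
    (e₁ : t₁^5 - 2*t₁^3 + B*t₁ = C) (e₂ : t₂^5 - 2*t₂^3 + B*t₂ = C)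
    (e₃ : t₃^5 - 2*t₃^3 + B*t₃ = C) (e₄ : t₄^5 - 2*t₄^3 + B*t₄ = C) : False := by
  obtain ⟨z₁, hz₁l, hz₁r, hE₁⟩ := rolle_quintic B C t₁ t₂ o₁ e₁ e₂
  obtain ⟨z₂, hz₂l, hz₂r, hE₂⟩ := rolle_quintic B C t₂ t₃ o₂ e₂ e₃
  obtain ⟨z₃, hz₃l, hz₃r, hE₃⟩ := rolle_quintic B C t₃ t₄ o₃ e₃ e₄
  have hB : 1 < B := b_gt_one B z₁ z₂ z₃ (by linarith) (by linarith)
    (by linarith) (by linarith) hE₁ hE₂ hE₃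
  -- sign analysis
  have fac : ∀ t : ℝ, t^5 - 2*t^3 + B*t = t * ((t^2-1)^2 + (B-1)) := by intro t; ring
  have pos : ∀ t : ℝ, 0 < (t^2-1)^2 + (B-1) := by intro t; nlinarith [sq_nonneg (t^2-1)]
  rcases lt_trichotomy C 0 with hC | hC | hC
  · -- all tᵢ < 0, so z's are in (-1,0), squares strictly decreasing
    have ht4 : t₄ < 0 := by
      by_contra h; push_neg at h
      have h2 : 0 ≤ t₄ * ((t₄^2-1)^2 + (B-1)) := mul_nonneg h (le_of_lt (pos t₄))
      rw [← fac] at h2; linarith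
    have hzneg : z₃ < 0 := by linarith
    exact quad_contra B (z₃^2) (z₂^2) (z₁^2)
      (by nlinarith [mul_pos (show (0:ℝ) < z₃ - z₂ by linarith) (show (0:ℝ) < -(z₂+z₃) by linarith)])
      (by nlinarith [mul_pos (show (0:ℝ) < z₂ - z₁ by linarith) (show (0:ℝ) < -(z₁+z₂) by linarith)])
      (by linear_combination hE₃) (by linear_combination hE₂) (by linear_combination hE₁)
  · -- C = 0 : t₁ = t₂ = 0
    have h1 : t₁ = 0 := by
      have hz : t₁ * ((t₁^2-1)^2 + (B-1)) = 0 := by linear_combination e₁ + hC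
      rcases mul_eq_zero.mp hz with h | h
      · exact h
      · exact absurd h (ne_of_gt (pos t₁))
    have h2 : t₂ = 0 := by
      have hz : t₂ * ((t₂^2-1)^2 + (B-1)) = 0 := by linear_combination e₂ + hC
      rcases mul_eq_zero.mp hz with h | h
      · exact h
      · exact absurd h (ne_of_gt (pos t₂))
    rw [h1, h2] at o₁; exact lt_irrefl 0 o₁
  · -- all tᵢ > 0
    have ht1 : 0 < t₁ := by
      by_contra h; push_neg at h
      have h2 : t₁ * ((t₁^2-1)^2 + (B-1)) ≤ 0 :=
        mul_nonpos_of_nonpos_of_nonneg h (le_of_lt (pos t₁))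
      rw [← fac] at h2; linarith
    have hzpos : 0 < z₁ := by linarith
    exact quad_contra B (z₁^2) (z₂^2) (z₃^2)
      (by nlinarith [mul_pos (show (0:ℝ) < z₂ - z₁ by linarith) (show (0:ℝ) < z₂+z₁ by linarith)])
      (by nlinarith [mul_pos (show (0:ℝ) < z₃ - z₂ by linarith) (show (0:ℝ) < z₃+z₂ by linarith)])
      (by linear_combination hE₁) (by linear_combination hE₂) (by linear_combination hE₃)

private lemma chord_bad (a b p r x₁ x₂ m q : ℝ)
    (hap : a ≤ p) (hrb : r ≤ b)
    (hpx : p < x₁) (h12 : x₁ < x₂) (hxr : x₂ < r)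
    (hp : p*(1-p^2)^2 = m*p + q) (hr : r*(1-r^2)^2 = m*r + q)
    (hsign : (x₁*(1-x₁^2)^2 < m*x₁ + q ∧ m*x₂ + q < x₂*(1-x₂^2)^2) ∨
             (m*x₁ + q < x₁*(1-x₁^2)^2 ∧ x₂*(1-x₂^2)^2 < m*x₂ + q)) :
    ¬ CurveCrossing 2 (Icc a b) (fun t => ![t, t * (1 - t ^ 2) ^ 2]) := by
  intro hcc
  have hle := hcc {x : Fin 2 → ℝ | ∑ i, (![m, -1] : Fin 2 → ℝ) i * x i = -q}
    ⟨![m, -1], -q, by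
      intro h0
      have h1 := congrFun h0 1
      norm_num at h1, rfl⟩
  set S := {t | t ∈ Icc a b ∧ (fun t : ℝ => ![t, t * (1 - t ^ 2) ^ 2]) t ∈
    {x : Fin 2 → ℝ | ∑ i, (![m, -1] : Fin 2 → ℝ) i * x i = -q}} with hS
  have hmem : ∀ t : ℝ, t ∈ Icc a b → t*(1-t^2)^2 = m*t + q → t ∈ S := by
    intro t ht he
    refine ⟨ht, ?_⟩
    simp only [mem_setOf_eq, Fin.sum_univ_two, Matrix.cons_val_zero, Matrix.cons_val_one,
      Matrix.head_cons]
    linarith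
  -- interior root by IVT
  set g : ℝ → ℝ := fun t => t*(1-t^2)^2 - (m*t+q) with hg
  have hgc : ContinuousOn g (Icc x₁ x₂) := by fun_prop
  have hy : ∃ y ∈ Ioo x₁ x₂, g y = 0 := by
    rcases hsign with ⟨h1, h2⟩ | ⟨h1, h2⟩
    · have h0 : (0:ℝ) ∈ Ioo (g x₁) (g x₂) := by constructor <;> (simp only [hg]; linarith)
      obtain ⟨y, hy1, hy2⟩ := intermediate_value_Ioo (le_of_lt h12) hgc h0
      exact ⟨y, hy1, hy2⟩
    · have h0 : (0:ℝ) ∈ Ioo (g x₂) (g x₁) := by constructor <;> (simp only [hg]; linarith)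
      obtain ⟨y, hy1, hy2⟩ := intermediate_value_Ioo' (le_of_lt h12) hgc h0
      exact ⟨y, hy1, hy2⟩
  obtain ⟨y, hyI, hy0⟩ := hy
  have hpS : p ∈ S := hmem p ⟨hap, by linarith⟩ hp
  have hrS : r ∈ S := hmem r ⟨by linarith, hrb⟩ hr
  have hyS : y ∈ S := by
    have h0 : y*(1-y^2)^2 - (m*y+q) = 0 := hy0
    exact hmem y ⟨by linarith [hyI.1], by linarith [hyI.2]⟩ (by linarith)
  have hsub : ({p, y, r} : Set ℝ) ⊆ S := by
    intro z hz
    rcases hz with rfl | rfl | rfl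
    · exact hpS
    · exact hyS
    · exact hrS
  have hyr : y ≠ r := by
    intro h; rw [h] at hyI; linarith [hyI.2]
  have hpm : p ∉ ({y, r} : Set ℝ) := by
    intro h
    rcases h with h | h
    · rw [← h] at hyI; linarith [hyI.1]
    · rw [h] at hpx; linarith
  have h3 : ({p, y, r} : Set ℝ).encard = 3 := by
    rw [Set.encard_insert_of_notMem hpm, Set.encard_pair hyr]
    rfl
  have : (3:ℕ∞) ≤ 2 := h3 ▸ (Set.encard_le_encard hsub) |>.trans hle
  norm_num at this

-- the three bad spans, as specialized lemmas
private lemma span_neg {a b : ℝ} (ha : a ≤ -9/10) (hb : -3/5 ≤ b) :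
    ¬ CurveCrossing 2 (Icc a b) (fun t => ![t, t * (1 - t ^ 2) ^ 2]) :=
  chord_bad a b (-9/10) (-3/5) (-17/20) (-7/10) (-7109/10000) (-6723/10000)
    ha hb (by norm_num) (by norm_num) (by norm_num)
    (by norm_num) (by norm_num) (Or.inr (by norm_num))

private lemma span_mid {a b : ℝ} (ha : a ≤ -1/10) (hb : 1/10 ≤ b) :
    ¬ CurveCrossing 2 (Icc a b) (fun t => ![t, t * (1 - t ^ 2) ^ 2]) :=
  chord_bad a b (-1/10) (1/10) (-1/20) (1/20) (9801/10000) 0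
    ha hb (by norm_num) (by norm_num) (by norm_num)
    (by norm_num) (by norm_num) (Or.inl (by norm_num))

private lemma span_pos {a b : ℝ} (ha : a ≤ 3/5) (hb : 9/10 ≤ b) :
    ¬ CurveCrossing 2 (Icc a b) (fun t => ![t, t * (1 - t ^ 2) ^ 2]) :=
  chord_bad a b (3/5) (9/10) (7/10) (17/20) (-7109/10000) (6723/10000)
    ha hb (by norm_num) (by norm_num) (by norm_num)
    (by norm_num) (by norm_num) (Or.inr (by norm_num))


private theorem curve_part1 : CurveCrossing 3 (Set.Icc (-1 : ℝ) 1)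
    (fun t => ![t, t * (1 - t ^ 2) ^ 2]) := by
  rintro h ⟨u, c, hu, rfl⟩
  by_contra hcon
  push_neg at hcon
  obtain ⟨a, b, a', b', ha, hb, ha', hb', hab, hba', hab'⟩ := exists_four_lt _ hcon
  simp only [mem_setOf_eq, mem_Icc, Fin.sum_univ_two, Matrix.cons_val_zero,
    Matrix.cons_val_one, Matrix.head_cons] at ha hb ha' hb'
  by_cases hu1 : u 1 = 0
  · have hu0 : u 0 ≠ 0 := by
      intro hu0; apply hu
      funext i; fin_cases i <;> simp [hu0, hu1]
    have h1 : u 0 * a = c := by rw [hu1] at ha; linarith [ha.2]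
    have h2 : u 0 * b = c := by rw [hu1] at hb; linarith [hb.2]
    have : a = b := by
      field_simp at h1 h2
      exact mul_left_cancel₀ hu0 (h1.trans h2.symm)
    linarith
  · set B := (u 0 + u 1) / u 1 with hB
    set C := c / u 1 with hC
    have key : ∀ t : ℝ, u 0 * t + u 1 * (t * (1-t^2)^2) = c →
        t^5 - 2*t^3 + B*t = C := by
      intro t ht
      rw [hB, hC]
      field_simp
      linear_combination ht
    exact no_four_roots B C a b a' b' ha.1.1 hb'.1.2 hab hba' hab'
      (key a ha.2) (key b hb.2) (key a' ha'.2) (key b' hb'.2)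

private theorem curve_part2 : ¬ ∃ k : ℕ, k < 4 ∧ ∃ t : Fin (k + 1) → ℝ,
    t 0 = -1 ∧ t (Fin.last k) = 1 ∧ Monotone t ∧
    ∀ j : Fin k, CurveCrossing 2 (Set.Icc (t j.castSucc) (t j.succ))
      (fun t => ![t, t * (1 - t ^ 2) ^ 2]) := by
  rintro ⟨k, hk, t, h0, hl, hmono, hcc⟩
  interval_cases k
  · rw [show (Fin.last 0) = 0 by rfl, h0] at hl
    norm_num at hl
  · -- one piece [-1,1]
    have h := hcc 0
    rw [show ((0:Fin 1).castSucc) = 0 by rfl, show ((0:Fin 1).succ) = Fin.last 1 by rfl,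
      h0, hl] at h
    exact span_mid (by norm_num) (by norm_num) h
  · -- two pieces
    by_cases hcut : (-3/5 : ℝ) ≤ t 1
    · have h := hcc 0
      rw [show ((0:Fin 2).castSucc) = 0 by rfl, show ((0:Fin 2).succ) = 1 by rfl, h0] at h
      exact span_neg (by norm_num) hcut h
    · push_neg at hcut
      have h := hcc 1
      rw [show ((1:Fin 2).castSucc) = 1 by rfl, show ((1:Fin 2).succ) = Fin.last 2 by rfl,
        hl] at h
      exact span_pos (by linarith) (by norm_num) h
  · -- three pieces
    by_cases hc1 : (-3/5 : ℝ) ≤ t 1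
    · have h := hcc 0
      rw [show ((0:Fin 3).castSucc) = 0 by rfl, show ((0:Fin 3).succ) = 1 by rfl, h0] at h
      exact span_neg (by norm_num) hc1 h
    · push_neg at hc1
      by_cases hc2 : (1/10 : ℝ) ≤ t 2
      · have h := hcc 1
        rw [show ((1:Fin 3).castSucc) = 1 by rfl, show ((1:Fin 3).succ) = 2 by rfl] at h
        exact span_mid (by linarith) hc2 h
      · push_neg at hc2
        have h := hcc 2
        rw [show ((2:Fin 3).castSucc) = 2 by rfl, show ((2:Fin 3).succ) = Fin.last 3 by rfl,
          hl] at h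
        exact span_pos (by linarith) (by norm_num) h

end Helpers

/-- The curve `γ t = (t, t (1 - t²)²)` on `[-1, 1]` is `3`-crossing, but
`[-1, 1]` cannot be subdivided into fewer than `4` closed subintervals on each of which
`γ` is convex (`2`-crossing); hence `M(2) ≥ 4`. -/
theorem three_crossing_curve_needs_four_pieces :
    CurveCrossing 3 (Set.Icc (-1 : ℝ) 1)
        (fun t => ![t, t * (1 - t ^ 2) ^ 2]) ∧
      ¬ ∃ k : ℕ, k < 4 ∧ ∃ t : Fin (k + 1) → ℝ,
          t 0 = -1 ∧ t (Fin.last k) = 1 ∧ Monotone t ∧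
          ∀ j : Fin k, CurveCrossing 2 (Set.Icc (t j.castSucc) (t j.succ))
            (fun t => ![t, t * (1 - t ^ 2) ^ 2]) :=
  ⟨curve_part1, curve_part2⟩
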